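/- Let P be a Köthe set on ℕ such that either every p ∈ P is nondecreasing (p_n ≤ p_{n+1} for all n) or every p ∈ P is nonincreasing (p_{n+1} ≤ p_n for all n). Then P satisfies condition (M): there exist complex matrices α = (α_{ij})_{i,j∈ℕ} and β = (β_{ij})_{i,j∈ℕ} such that (M1) α_{ij} + β_{ij} = 1 for all i, j; (M2) for every p ∈ P there exist C > 0 and q ∈ P such that sup_i |α_{ij}| p_i p_j ≤ C q_j² for all j; and (M3) for every p ∈ P there exist C > 0 and q ∈ P such that sup_j |β_{ij}| p_j p_i ≤ C q_i² for all i. -/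

import Mathlib

/-- A Köthe set on `ℕ` all of whose elements are nondecreasing, or all of
whose elements are nonincreasing, satisfies condition (M). -/
theorem kothe_condition_M_of_monotone (P : Set (ℕ → ℝ))
    (hP0 : ∀ p ∈ P, ∀ n, 0 ≤ p n)
    (hP1 : ∀ n, ∃ p ∈ P, 0 < p n)
    (hP2 : ∀ p ∈ P, ∀ q ∈ P, ∃ r ∈ P, ∀ n, max (p n) (q n) ≤ r n)
    (hmono : (∀ p ∈ P, Monotone p) ∨ (∀ p ∈ P, Antitone p)) :
    ∃ α β : ℕ → ℕ → ℂ,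
      (∀ i j, α i j + β i j = 1) ∧
      (∀ p ∈ P, ∃ C : ℝ, 0 < C ∧ ∃ q ∈ P, ∀ j, ∀ i,
        ‖α i j‖ * p i * p j ≤ C * (q j) ^ 2) ∧
      (∀ p ∈ P, ∃ C : ℝ, 0 < C ∧ ∃ q ∈ P, ∀ i, ∀ j,
        ‖β i j‖ * p j * p i ≤ C * (q i) ^ 2) := by
  rcases hmono with hm | hm
  · refine ⟨fun i j => if i ≤ j then 1 else 0, fun i j => if i ≤ j then 0 else 1,
      fun i j => by by_cases h : i ≤ j <;> simp [h], ?_, ?_⟩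
    · intro p hp
      refine ⟨1, one_pos, p, hp, fun j i => ?_⟩
      by_cases h : i ≤ j
      · simp only [h, if_true, map_one, norm_one, one_mul, one_mul, sq]
        exact mul_le_mul_of_nonneg_right (hm p hp h) (hP0 p hp j)
      · simp only [h, if_false, map_zero, norm_zero, zero_mul, one_mul]
        positivity
    · intro p hp
      refine ⟨1, one_pos, p, hp, fun i j => ?_⟩
      by_cases h : i ≤ j
      · simp only [h, if_true, map_zero, norm_zero, zero_mul, one_mul]
        positivity
      · simp only [h, if_false, map_one, norm_one, one_mul, one_mul, sq]
        exact mul_le_mul_of_nonneg_right (hm p hp (le_of_not_ge h)) (hP0 p hp i)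
  · refine ⟨fun i j => if j ≤ i then 1 else 0, fun i j => if j ≤ i then 0 else 1,
      fun i j => by by_cases h : j ≤ i <;> simp [h], ?_, ?_⟩
    · intro p hp
      refine ⟨1, one_pos, p, hp, fun j i => ?_⟩
      by_cases h : j ≤ i
      · simp only [h, if_true, map_one, norm_one, one_mul, one_mul, sq]
        exact mul_le_mul_of_nonneg_right (hm p hp h) (hP0 p hp j)
      · simp only [h, if_false, map_zero, norm_zero, zero_mul, one_mul]
        positivity
    · intro p hp
      refine ⟨1, one_pos, p, hp, fun i j => ?_⟩
      by_cases h : j ≤ i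
      · simp only [h, if_true, map_zero, norm_zero, zero_mul, one_mul]
        positivity
      · simp only [h, if_false, map_one, norm_one, one_mul, one_mul, sq]
        exact mul_le_mul_of_nonneg_right (hm p hp (le_of_not_ge h)) (hP0 p hp i)
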